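/- Let A = {a1 < a2 < ...} and B = {b1 < b2 < ...} be two infinite sequences of positive integers with b1 > 1 such that P(A) = ℕ \ B, and let k be the index with a_k < b1 < a_{k+1}. If b2 ≥ 3·b1 + 5, then P({a1, ..., a_{k+2}}) = [0, a_{k+2} + 2·b1] \ {b1, a_{k+2} + b1}. -/

import Mathlib

/-- The set of all finite subset sums of a set of positive integers
(finite sums of distinct elements; the empty sum 0 is included). -/
def subsetSums (S : Set ℕ) : Set ℕ :=
  {n | ∃ F : Finset ℕ, ↑F ⊆ S ∧ ∑ x ∈ F, x = n}

lemma mem_le_sum {F : Finset ℕ} {x : ℕ} (hx : x ∈ F) : x ≤ ∑ y ∈ F, y :=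
  Finset.single_le_sum (fun i _ => Nat.zero_le i) hx

lemma subsetSums_mono {S T : Set ℕ} (h : S ⊆ T) : subsetSums S ⊆ subsetSums T := by
  rintro n ⟨F, hF, rfl⟩
  exact ⟨F, hF.trans h, rfl⟩

lemma sum_le_of_subset_image {a : ℕ → ℕ} (ha : StrictMono a) {m : ℕ}
    {F : Finset ℕ} (hF : ↑F ⊆ a '' Set.Iio m) :
    ∑ x ∈ F, x ≤ ∑ j ∈ Finset.range m, a j := by
  have hsub : F ⊆ (Finset.range m).image a := by
    intro x hx
    obtain ⟨j, hj, rfl⟩ := hF hx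
    exact Finset.mem_image.mpr ⟨j, Finset.mem_range.mpr (Set.mem_Iio.mp hj), rfl⟩
  calc ∑ x ∈ F, x ≤ ∑ x ∈ (Finset.range m).image a, x :=
        Finset.sum_le_sum_of_subset hsub
    _ = ∑ j ∈ Finset.range m, a j :=
        Finset.sum_image (fun i _ j _ h => ha.injective h)

lemma interval_mem {a : ℕ → ℕ} (ha : StrictMono a) :
    ∀ m : ℕ, (∀ i < m, a i ≤ (∑ j ∈ Finset.range i, a j) + 1) →
      ∀ n, n ≤ ∑ j ∈ Finset.range m, a j → n ∈ subsetSums (a '' Set.Iio m) := by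
  intro m
  induction m with
  | zero =>
    intro _ n hn
    simp only [Finset.range_zero, Finset.sum_empty, Nat.le_zero] at hn
    exact ⟨∅, by simp, by simp [hn]⟩
  | succ m ih =>
    intro hcomp n hn
    rw [Finset.sum_range_succ] at hn
    by_cases h : n ≤ ∑ j ∈ Finset.range m, a j
    · exact subsetSums_mono (Set.image_mono (f := a) (Set.Iio_subset_Iio (Nat.le_succ m)))
        (ih (fun i hi => hcomp i (by omega)) n h)
    · push_neg at h
      have ham : a m ≤ n := by
        have := hcomp m (by omega); omega
      obtain ⟨F, hF, hs⟩ := ih (fun i hi => hcomp i (by omega)) (n - a m) (by omega)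
      have hFsmall : ∀ x ∈ F, x < a m := by
        intro x hx
        obtain ⟨j, hj, rfl⟩ := hF hx
        exact ha (Set.mem_Iio.mp hj)
      have hmF : a m ∉ F := fun hmem => lt_irrefl _ (hFsmall _ hmem)
      refine ⟨insert (a m) F, ?_, ?_⟩
      · rw [Finset.coe_insert]
        refine Set.insert_subset ⟨m, Set.mem_Iio.mpr (by omega), rfl⟩
          (hF.trans (Set.image_mono (f := a) (Set.Iio_subset_Iio (Nat.le_succ m))))
      · rw [Finset.sum_insert hmF, hs]
        omega

/-- If `b₂ ≥ 3b₁+5` then `P({a₁,…,a_{k+2}}) = [0, a_{k+2}+2b₁] \ {b₁, a_{k+2}+b₁}`.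
Here `a i`, `b i` are the `(i+1)`-st elements of `A`, `B`. -/
theorem stmt6 (a b : ℕ → ℕ) (ha : StrictMono a) (hapos : ∀ i, 0 < a i)
    (hb : StrictMono b) (hb1 : 1 < b 0)
    (hPA : subsetSums (Set.range a) = Set.univ \ Set.range b)
    (k : ℕ) (hk1 : a k < b 0) (hk2 : b 0 < a (k + 1))
    (hb2 : 3 * b 0 + 5 ≤ b 1) :
    subsetSums (a '' Set.Iio (k + 3)) =
      Set.Icc 0 (a (k + 2) + 2 * b 0) \ {b 0, a (k + 2) + b 0} := by
  have hmemPA : ∀ n : ℕ, n ∉ Set.range b → n ∈ subsetSums (Set.range a) := by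
    intro n hn; rw [hPA]; exact ⟨trivial, hn⟩
  have hb0notP : b 0 ∉ subsetSums (Set.range a) := by
    rw [hPA]; rintro ⟨-, h⟩; exact h ⟨0, rfl⟩
  have hnotb_lt : ∀ n, n < b 0 → n ∉ Set.range b := by
    rintro n hn ⟨i, rfl⟩
    exact absurd (hb.monotone (Nat.zero_le i)) (by omega)
  have hnotb_mid : ∀ n, b 0 < n → n < b 1 → n ∉ Set.range b := by
    rintro n h1 h2 ⟨i, rfl⟩
    rcases Nat.eq_zero_or_pos i with rfl | hi
    · omega
    · exact absurd (hb.monotone (show 1 ≤ i from hi)) (by omega)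
  -- every n < b 0 is a subset sum of {a 0, ..., a k}
  have hL1 : ∀ n, n < b 0 → n ∈ subsetSums (a '' Set.Iio (k+1)) := by
    intro n hn
    obtain ⟨F, hF, hs⟩ := hmemPA n (hnotb_lt n hn)
    refine ⟨F, ?_, hs⟩
    intro x hx
    obtain ⟨j, rfl⟩ := hF hx
    have hle : a j ≤ n := by
      have h1 := mem_le_sum hx
      omega
    exact ⟨j, Set.mem_Iio.mpr (ha.lt_iff_lt.mp (by omega : a j < a (k+1))), rfl⟩
  -- completeness
  have hcomp : ∀ i, i < k + 1 → a i ≤ (∑ j ∈ Finset.range i, a j) + 1 := by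
    intro i hik
    by_contra hcon
    push_neg at hcon
    have hlt : (∑ j ∈ Finset.range i, a j) + 1 < b 0 := by
      have : a i ≤ a k := ha.monotone (by omega)
      omega
    obtain ⟨F, hF, hs⟩ := hL1 ((∑ j ∈ Finset.range i, a j) + 1) hlt
    have hsub : ↑F ⊆ a '' Set.Iio i := by
      intro x hx
      obtain ⟨j, hj, rfl⟩ := hF hx
      have hle : a j ≤ (∑ j ∈ Finset.range i, a j) + 1 := by
        have h1 := mem_le_sum hx
        omega
      exact ⟨j, Set.mem_Iio.mpr (ha.lt_iff_lt.mp (by omega : a j < a i)), rfl⟩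
    have := sum_le_of_subset_image ha hsub
    omega
  -- the sum of the first k+1 terms is b 0 - 1
  have hSk : (∑ j ∈ Finset.range (k+1), a j) + 1 = b 0 := by
    have hub : (∑ j ∈ Finset.range (k+1), a j) < b 0 := by
      by_contra hge
      push_neg at hge
      have hmem := interval_mem ha (k+1) hcomp (b 0) hge
      exact hb0notP (subsetSums_mono (Set.image_subset_range a _) hmem)
    have hlb : b 0 - 1 ≤ ∑ j ∈ Finset.range (k+1), a j := by
      obtain ⟨F, hF, hs⟩ := hL1 (b 0 - 1) (by omega)
      have := sum_le_of_subset_image ha hF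
      omega
    omega
  have haneb0 : ∀ j, a j ≠ b 0 := by
    intro j he
    apply hb0notP
    refine ⟨{a j}, ?_, by simp [he]⟩
    rw [Finset.coe_singleton]
    exact Set.singleton_subset_iff.mpr ⟨j, rfl⟩
  -- a (k+1) = b 0 + 1
  have hak1 : a (k+1) = b 0 + 1 := by
    obtain ⟨F, hF, hs⟩ := hmemPA (b 0 + 1) (hnotb_mid _ (by omega) (by omega))
    have hex : ∃ x ∈ F, b 0 < x := by
      by_contra hcon
      push_neg at hcon
      have hsub : ↑F ⊆ a '' Set.Iio (k+1) := by
        intro x hx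
        obtain ⟨j, rfl⟩ := hF hx
        have hle : a j ≤ b 0 := hcon _ hx
        have hne := haneb0 j
        exact ⟨j, Set.mem_Iio.mpr (ha.lt_iff_lt.mp (by omega : a j < a (k+1))), rfl⟩
      have := sum_le_of_subset_image ha hsub
      omega
    obtain ⟨x, hxF, hxb⟩ := hex
    obtain ⟨j, rfl⟩ := hF hxF
    have hle : a j ≤ b 0 + 1 := by
      have h1 := mem_le_sum hxF
      omega
    have hjk : k + 1 ≤ j := by
      by_contra hc
      push_neg at hc
      have : a j ≤ a k := ha.monotone (by omega)
      omega
    have := ha.monotone hjk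
    omega
  have hS2 : (∑ j ∈ Finset.range (k+2), a j) = 2 * b 0 := by
    rw [Finset.sum_range_succ, hak1]; omega
  -- bounds on a (k+2)
  have hak2_ub : a (k+2) ≤ 2 * b 0 + 1 := by
    obtain ⟨F, hF, hs⟩ := hmemPA (2 * b 0 + 1) (hnotb_mid _ (by omega) (by omega))
    have hex : ∃ x ∈ F, a (k+1) < x := by
      by_contra hcon
      push_neg at hcon
      have hsub : ↑F ⊆ a '' Set.Iio (k+2) := by
        intro x hx
        obtain ⟨j, rfl⟩ := hF hx
        have hle : j ≤ k + 1 := ha.le_iff_le.mp (hcon _ hx)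
        exact ⟨j, Set.mem_Iio.mpr (by omega), rfl⟩
      have := sum_le_of_subset_image ha hsub
      omega
    obtain ⟨x, hxF, hxb⟩ := hex
    obtain ⟨j, rfl⟩ := hF hxF
    have hle : a j ≤ 2 * b 0 + 1 := by
      have h1 := mem_le_sum hxF
      omega
    have hjk : k + 2 ≤ j := by
      by_contra hc
      push_neg at hc
      have : a j ≤ a (k+1) := ha.monotone (by omega)
      omega
    have := ha.monotone hjk
    omega
  have hak2_lb : b 0 + 2 ≤ a (k+2) := by
    have := ha (show k+1 < k+2 by omega)
    omega
  have hS3 : (∑ j ∈ Finset.range (k+3), a j) = a (k+2) + 2 * b 0 := by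
    rw [Finset.sum_range_succ, hS2]; omega
  -- builder lemma
  have key : ∀ r, r < b 0 → ∀ G : Finset ℕ, ↑G ⊆ a '' Set.Iio (k+3) →
      (∀ x ∈ G, b 0 < x) → (∑ x ∈ G, x) + r ∈ subsetSums (a '' Set.Iio (k+3)) := by
    intro r hr G hG hGb
    obtain ⟨F, hF, hs⟩ := hL1 r hr
    have hFsmall : ∀ x ∈ F, x < b 0 := by
      intro x hx
      have h1 := mem_le_sum hx
      omega
    have hdisj : Disjoint G F := by
      rw [Finset.disjoint_left]
      intro x hxG hxF
      have := hGb x hxG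
      have := hFsmall x hxF
      omega
    refine ⟨G ∪ F, ?_, ?_⟩
    · rw [Finset.coe_union]
      exact Set.union_subset hG
        (hF.trans (Set.image_mono (f := a) (Set.Iio_subset_Iio (by omega))))
    · rw [Finset.sum_union hdisj, hs]
  have hm1 : a (k+1) ∈ a '' Set.Iio (k+3) := ⟨k+1, Set.mem_Iio.mpr (by omega), rfl⟩
  have hm2 : a (k+2) ∈ a '' Set.Iio (k+3) := ⟨k+2, Set.mem_Iio.mpr (by omega), rfl⟩
  ext n
  simp only [Set.mem_diff, Set.mem_Icc, Set.mem_insert_iff, Set.mem_singleton_iff]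
  constructor
  · rintro ⟨F, hF, rfl⟩
    refine ⟨⟨Nat.zero_le _, ?_⟩, ?_⟩
    · have := sum_le_of_subset_image ha hF
      omega
    · rintro (he | he)
      · exact hb0notP (subsetSums_mono (Set.image_subset_range a _) ⟨F, hF, he⟩)
      · by_cases hmem : a (k+2) ∈ F
        · apply hb0notP
          refine ⟨F.erase (a (k+2)), ?_, ?_⟩
          · exact (Finset.coe_subset.mpr (Finset.erase_subset _ _)).trans
              (hF.trans (Set.image_subset_range a _))
          · have h2 : (∑ x ∈ F.erase (a (k+2)), x) + a (k+2) = ∑ x ∈ F, x :=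
              Finset.sum_erase_add F _ hmem
            omega
        · have hsub : ↑F ⊆ a '' Set.Iio (k+2) := by
            intro x hx
            obtain ⟨j, hj, rfl⟩ := hF hx
            have hjne : j ≠ k + 2 := by
              rintro rfl
              exact hmem hx
            have hjlt := Set.mem_Iio.mp hj
            exact ⟨j, Set.mem_Iio.mpr (by omega), rfl⟩
          have := sum_le_of_subset_image ha hsub
          omega
  · rintro ⟨⟨-, hub⟩, hne⟩
    push_neg at hne
    obtain ⟨hne1, hne2⟩ := hne
    rcases lt_trichotomy n (b 0) with h1 | h1 | h1
    · have := key n h1 ∅ (by simp) (by simp)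
      simpa using this
    · exact absurd h1 hne1
    · by_cases h2 : n < a (k+2) + b 0
      · by_cases h3 : n ≤ 2 * b 0
        · have hkey := key (n - (b 0 + 1)) (by omega) {a (k+1)}
            (by rw [Finset.coe_singleton]; exact Set.singleton_subset_iff.mpr hm1)
            (by intro x hx; rw [Finset.mem_singleton] at hx; omega)
          rw [Finset.sum_singleton] at hkey
          have hv : a (k+1) + (n - (b 0 + 1)) = n := by omega
          rwa [hv] at hkey
        · have hkey := key (n - a (k+2)) (by omega) {a (k+2)}
            (by rw [Finset.coe_singleton]; exact Set.singleton_subset_iff.mpr hm2)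
            (by intro x hx; rw [Finset.mem_singleton] at hx; omega)
          rw [Finset.sum_singleton] at hkey
          have hv : a (k+2) + (n - a (k+2)) = n := by omega
          rwa [hv] at hkey
      · have hpairne : a (k+1) ≠ a (k+2) := by omega
        have hkey := key (n - (a (k+2) + b 0 + 1)) (by omega) {a (k+1), a (k+2)}
          (by
            rw [Finset.coe_insert, Finset.coe_singleton]
            exact Set.insert_subset hm1 (Set.singleton_subset_iff.mpr hm2))
          (by
            intro x hx
            rw [Finset.mem_insert, Finset.mem_singleton] at hx
            rcases hx with rfl | rfl <;> omega)
        rw [Finset.sum_pair hpairne] at hkey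
        have hv : a (k+1) + a (k+2) + (n - (a (k+2) + b 0 + 1)) = n := by omega
        rwa [hv] at hkey
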